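/- Let 𝕌 be a composite theory of 𝕋 after 𝕊, with free algebra monads U, S, T, and let φ : U ⇒ TS and ψ : TS ⇒ U be the natural isomorphisms induced by separation. Define η^{TS} := η^T η^S and μ^{TS} := φ ∘ μ^U ∘ (ψU ∘ TSψ). Then (TS, η^{TS}, μ^{TS}) is a monad, i.e. it satisfies both unit laws μ^{TS} ∘ TSη^{TS} = id = μ^{TS} ∘ η^{TS}TS and the associativity law μ^{TS} ∘ μ^{TS}TS = μ^{TS} ∘ TSμ^{TS}. -/
import Mathlib


/-! ## Algebraic signatures, terms and equational logic -/

/-- An algebraic signature: a set of operation symbols with arities. -/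
structure Sgn where
  ops : Type
  ar : ops → ℕ

/-- Terms over a signature `σ` with variables in `X`. -/
inductive Trm (σ : Sgn) (X : Type) : Type
  | var : X → Trm σ X
  | op : (f : σ.ops) → (Fin (σ.ar f) → Trm σ X) → Trm σ X

/-- Simultaneous substitution. -/
def Trm.bind {σ : Sgn} {X Y : Type} : Trm σ X → (X → Trm σ Y) → Trm σ Y
  | .var x, g => g x
  | .op f k, g => .op f fun i => (k i).bind g

/-- Renaming of variables. -/
def Trm.rename {σ : Sgn} {X Y : Type} (f : X → Y) (t : Trm σ X) : Trm σ Y :=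
  t.bind fun x => .var (f x)

/-- Equations over `σ`: pairs of terms over the fixed countable set `ℕ` of variables. -/
abbrev Eqn (σ : Sgn) := Trm σ ℕ × Trm σ ℕ

/-- Derivability in equational logic from the set of axioms `E`
(axioms, reflexivity, symmetry, transitivity, congruence, substitution). -/
inductive Deriv {σ : Sgn} (E : Set (Eqn σ)) : {X : Type} → Trm σ X → Trm σ X → Prop
  | ax {X : Type} {e : Eqn σ} (he : e ∈ E) (g : ℕ → Trm σ X) :
      Deriv E (e.1.bind g) (e.2.bind g)
  | refl {X : Type} (t : Trm σ X) : Deriv E t t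
  | symm {X : Type} {s t : Trm σ X} : Deriv E s t → Deriv E t s
  | trans {X : Type} {s t u : Trm σ X} : Deriv E s t → Deriv E t u → Deriv E s u
  | congr {X : Type} (f : σ.ops) {k k' : Fin (σ.ar f) → Trm σ X} :
      (∀ i, Deriv E (k i) (k' i)) → Deriv E (.op f k) (.op f k')
  | subst {X Y : Type} {s t : Trm σ X} (g : X → Trm σ Y) :
      Deriv E s t → Deriv E (s.bind g) (t.bind g)

/-- An algebraic theory: a signature together with a set of equations. -/
structure Thy where
  sig : Sgn
  eqns : Set (Eqn sig)

/-! ## The free algebra monad -/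

/-- Carrier of the free algebra monad: terms modulo derivable equality. -/
def FreeM (σ : Sgn) (E : Set (Eqn σ)) (X : Type) : Type :=
  Quot (fun s t : Trm σ X => Deriv E s t)

/-- Equivalence class of a term. -/
def FreeM.mk {σ : Sgn} {E : Set (Eqn σ)} {X : Type} (t : Trm σ X) : FreeM σ E X :=
  Quot.mk _ t

/-- Functorial action of the free algebra monad. -/
noncomputable def FreeM.map {σ : Sgn} {E : Set (Eqn σ)} {X Y : Type}
    (f : X → Y) (q : FreeM σ E X) : FreeM σ E Y :=
  FreeM.mk ((Quot.out q).rename f)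

/-- Unit of the free algebra monad. -/
def FreeM.unit {σ : Sgn} {E : Set (Eqn σ)} {X : Type} (x : X) : FreeM σ E X :=
  FreeM.mk (.var x)

/-- Multiplication of the free algebra monad (flattening). -/
noncomputable def FreeM.mul {σ : Sgn} {E : Set (Eqn σ)} {X : Type}
    (q : FreeM σ E (FreeM σ E X)) : FreeM σ E X :=
  FreeM.mk ((Quot.out q).bind fun c => Quot.out c)

/-! ## Disjoint union of signatures and separated terms -/

/-- Disjoint union of two signatures. -/
def Sgn.sum (σ τ : Sgn) : Sgn := ⟨σ.ops ⊕ τ.ops, Sum.elim σ.ar τ.ar⟩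

/-- Embedding of `σ`-terms into terms over the sum signature. -/
def Trm.inl {σ τ : Sgn} {X : Type} : Trm σ X → Trm (σ.sum τ) X
  | .var x => .var x
  | .op f k => .op (Sum.inl f) fun i => (k i).inl

/-- Embedding of `τ`-terms into terms over the sum signature. -/
def Trm.inr {σ τ : Sgn} {X : Type} : Trm τ X → Trm (σ.sum τ) X
  | .var x => .var x
  | .op f k => .op (Sum.inr f) fun i => (k i).inr

/-- Flattening of a separated term `t[s_x/x]` (`τ`-term over `σ`-terms)
into a term over the sum signature. -/
def sepTS {σ τ : Sgn} {X : Type} (t : Trm τ (Trm σ X)) : Trm (σ.sum τ) X :=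
  (Trm.inr t).bind fun s => Trm.inl s

/-- Flattening of a mixed term `s[t_x/x]` (`σ`-term over `τ`-terms)
into a term over the sum signature. -/
def sepST {σ τ : Sgn} {X : Type} (s : Trm σ (Trm τ X)) : Trm (σ.sum τ) X :=
  (Trm.inl s).bind fun t => Trm.inr t

/-- The element `[t[[s_x]_𝕊/x]]_𝕋` of `TSX` determined by a separated term. -/
def clTS (SS TT : Thy) {X : Type} (t : Trm TT.sig (Trm SS.sig X)) :
    FreeM TT.sig TT.eqns (FreeM SS.sig SS.eqns X) :=
  FreeM.mk (t.rename FreeM.mk)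

/-- The element `[s[[t_x]_𝕋/x]]_𝕊` of `STX` determined by a mixed term. -/
def clST (SS TT : Thy) {X : Type} (s : Trm SS.sig (Trm TT.sig X)) :
    FreeM SS.sig SS.eqns (FreeM TT.sig TT.eqns X) :=
  FreeM.mk (s.rename FreeM.mk)

/-! ## Composite theories -/

/-- A composite theory of `TT` after `SS`: a theory on the disjoint union
of the signatures, containing both sets of equations, in which every term
has a separation, and separations are essentially unique. -/
structure Composite (SS TT : Thy) where
  eqns : Set (Eqn (SS.sig.sum TT.sig))
  containsS : ∀ e ∈ SS.eqns, ((Trm.inl e.1 : Trm (SS.sig.sum TT.sig) ℕ), Trm.inl e.2) ∈ eqns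
  containsT : ∀ e ∈ TT.eqns, ((Trm.inr e.1 : Trm (SS.sig.sum TT.sig) ℕ), Trm.inr e.2) ∈ eqns
  sepExists : ∀ u : Trm (SS.sig.sum TT.sig) ℕ,
      ∃ t : Trm TT.sig (Trm SS.sig ℕ), Deriv eqns u (sepTS t)
  sepUnique : ∀ t t' : Trm TT.sig (Trm SS.sig ℕ),
      Deriv eqns (sepTS t) (sepTS t') → clTS SS TT t = clTS SS TT t'

/-! ## Distributive laws between free algebra monads -/

/-- A distributive law `λ : ST ⇒ TS` between the free algebra monads of `SS` and `TT`. -/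
structure DistLaw (SS TT : Thy) where
  app : ∀ X : Type, FreeM SS.sig SS.eqns (FreeM TT.sig TT.eqns X) →
      FreeM TT.sig TT.eqns (FreeM SS.sig SS.eqns X)
  natural : ∀ (X Y : Type) (f : X → Y)
      (q : FreeM SS.sig SS.eqns (FreeM TT.sig TT.eqns X)),
      app Y (FreeM.map (FreeM.map f) q) = FreeM.map (FreeM.map f) (app X q)
  unitS : ∀ (X : Type) (q : FreeM TT.sig TT.eqns X),
      app X (FreeM.unit q) = FreeM.map FreeM.unit q
  unitT : ∀ (X : Type) (q : FreeM SS.sig SS.eqns X),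
      app X (FreeM.map FreeM.unit q) = FreeM.unit q
  mulS : ∀ (X : Type)
      (q : FreeM SS.sig SS.eqns (FreeM SS.sig SS.eqns (FreeM TT.sig TT.eqns X))),
      app X (FreeM.mul q) =
        FreeM.map FreeM.mul (app (FreeM SS.sig SS.eqns X) (FreeM.map (app X) q))
  mulT : ∀ (X : Type)
      (q : FreeM SS.sig SS.eqns (FreeM TT.sig TT.eqns (FreeM TT.sig TT.eqns X))),
      app X (FreeM.map FreeM.mul q) =
        FreeM.mul (FreeM.map (app X) (app (FreeM TT.sig TT.eqns X) q))

/-! ## Statement 2: the monad structure on `TS` induced by a composite theory -/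

/-- The composite functor `TS`. -/
abbrev TSobj (SS TT : Thy) (X : Type) : Type :=
  FreeM TT.sig TT.eqns (FreeM SS.sig SS.eqns X)

/-- The unit `η^{TS} := η^T η^S`. -/
def etaTS (SS TT : Thy) (X : Type) (x : X) : TSobj SS TT X :=
  FreeM.unit (FreeM.unit x)

/-- The multiplication `μ^{TS} := φ ∘ μ^U ∘ (ψU ∘ TSψ)`. -/
noncomputable def muTS (SS TT : Thy) (U : Composite SS TT)
    (φ : ∀ X : Type, FreeM (SS.sig.sum TT.sig) U.eqns X → TSobj SS TT X)
    (ψ : ∀ X : Type, TSobj SS TT X → FreeM (SS.sig.sum TT.sig) U.eqns X)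
    (X : Type) (q : TSobj SS TT (TSobj SS TT X)) : TSobj SS TT X :=
  φ X (FreeM.mul (ψ (FreeM (SS.sig.sum TT.sig) U.eqns X)
    (FreeM.map (FreeM.map (ψ X)) q)))

/-! ### Auxiliary lemmas -/

section Helpers

variable {σ : Sgn} {E : Set (Eqn σ)} {X Y Z : Type}

theorem Deriv.of_eqvGen {s t : Trm σ X}
    (h : Relation.EqvGen (fun a b : Trm σ X => Deriv E a b) s t) : Deriv E s t := by
  induction h with
  | rel _ _ h => exact h
  | refl t => exact .refl t
  | symm _ _ _ ih => exact ih.symm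
  | trans _ _ _ _ _ ih1 ih2 => exact ih1.trans ih2

theorem FreeM.mk_out (q : FreeM σ E X) : FreeM.mk (Quot.out q) = q := Quot.out_eq q

theorem FreeM.out_mk (t : Trm σ X) :
    Deriv E (Quot.out (FreeM.mk (σ := σ) (E := E) t)) t :=
  Deriv.of_eqvGen (Quot.eqvGen_exact (Quot.out_eq _))

theorem Trm.bind_bind (t : Trm σ X) (g : X → Trm σ Y) (h : Y → Trm σ Z) :
    (t.bind g).bind h = t.bind (fun x => (g x).bind h) := by
  induction t with
  | var x => rfl
  | op f k ih => exact congrArg (Trm.op f) (funext ih)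

theorem Trm.bind_var (t : Trm σ X) : t.bind .var = t := by
  induction t with
  | var x => rfl
  | op f k ih => exact congrArg (Trm.op f) (funext ih)

theorem Deriv.bind_right (t : Trm σ X) {g g' : X → Trm σ Y}
    (h : ∀ x, Deriv E (g x) (g' x)) : Deriv E (t.bind g) (t.bind g') := by
  induction t with
  | var x => exact h x
  | op f k ih => exact .congr f ih

theorem FreeM.map_mk (f : X → Y) (t : Trm σ X) :
    FreeM.map (E := E) f (FreeM.mk t) = FreeM.mk (t.rename f) :=
  Quot.sound (Deriv.subst _ (FreeM.out_mk t))

theorem FreeM.mul_mk (u : Trm σ (FreeM σ E X)) :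
    FreeM.mul (FreeM.mk u) = FreeM.mk (u.bind Quot.out) :=
  Quot.sound (Deriv.subst _ (FreeM.out_mk u))

theorem FreeM.map_unit (f : X → Y) (x : X) :
    FreeM.map (E := E) f (FreeM.unit x) = FreeM.unit (f x) :=
  FreeM.map_mk f _

theorem FreeM.map_congr {f g : X → Y} (h : ∀ x, f x = g x) (q : FreeM σ E X) :
    FreeM.map (E := E) f q = FreeM.map g q := by
  rw [funext h]

theorem Trm.rename_rename (f : Y → Z) (g : X → Y) (t : Trm σ X) :
    (t.rename g).rename f = t.rename (fun x => f (g x)) :=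
  Trm.bind_bind t _ _

theorem FreeM.map_map (f : Y → Z) (g : X → Y) (q : FreeM σ E X) :
    FreeM.map (E := E) f (FreeM.map g q) = FreeM.map (fun x => f (g x)) q := by
  induction q using Quot.ind with
  | mk t =>
    rw [show Quot.mk _ t = FreeM.mk (E := E) t from rfl, FreeM.map_mk, FreeM.map_mk,
      FreeM.map_mk, Trm.rename_rename]

theorem FreeM.mul_unit (q : FreeM σ E X) : FreeM.mul (FreeM.unit q) = q := by
  rw [show (FreeM.unit q : FreeM σ E (FreeM σ E X)) = FreeM.mk (.var q) from rfl,
    FreeM.mul_mk]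
  exact FreeM.mk_out q

theorem FreeM.mul_map_unit (q : FreeM σ E X) :
    FreeM.mul (FreeM.map FreeM.unit q) = q := by
  induction q using Quot.ind with
  | mk t =>
    rw [show Quot.mk _ t = FreeM.mk (E := E) t from rfl, FreeM.map_mk, FreeM.mul_mk]
    apply Quot.sound
    have h1 : (t.rename (FreeM.unit (σ := σ) (E := E))).bind Quot.out
        = t.bind (fun x => Quot.out (FreeM.mk (σ := σ) (E := E) (.var x))) :=
      Trm.bind_bind t _ _
    rw [h1]
    have h2 : Deriv E (t.bind fun x => Quot.out (FreeM.mk (σ := σ) (E := E) (.var x)))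
        (t.bind .var) := Deriv.bind_right t fun x => FreeM.out_mk _
    exact h2.trans (by rw [Trm.bind_var]; exact Deriv.refl t)

theorem FreeM.map_mul (f : X → Y) (q : FreeM σ E (FreeM σ E X)) :
    FreeM.map f (FreeM.mul q) = FreeM.mul (FreeM.map (FreeM.map f) q) := by
  induction q using Quot.ind with
  | mk u =>
    rw [show Quot.mk _ u = FreeM.mk (E := E) u from rfl, FreeM.mul_mk, FreeM.map_mk,
      FreeM.map_mk, FreeM.mul_mk]
    apply Quot.sound
    have h1 : (u.bind Quot.out).rename f = u.bind (fun c => (Quot.out c).rename f) :=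
      Trm.bind_bind u _ _
    have h2 : (u.rename (FreeM.map f)).bind Quot.out
        = u.bind (fun c => Quot.out (FreeM.map f c)) := Trm.bind_bind u _ _
    rw [h1, h2]
    exact Deriv.bind_right u fun c => (FreeM.out_mk ((Quot.out c).rename f)).symm

theorem FreeM.mul_mul (q : FreeM σ E (FreeM σ E (FreeM σ E X))) :
    FreeM.mul (FreeM.mul q) = FreeM.mul (FreeM.map FreeM.mul q) := by
  induction q using Quot.ind with
  | mk w =>
    rw [show Quot.mk _ w = FreeM.mk (E := E) w from rfl, FreeM.mul_mk, FreeM.mul_mk,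
      FreeM.map_mk, FreeM.mul_mk]
    apply Quot.sound
    have h1 : (w.bind Quot.out).bind Quot.out
        = w.bind (fun c => (Quot.out c).bind Quot.out) := Trm.bind_bind w _ _
    have h2 : (w.rename FreeM.mul).bind Quot.out
        = w.bind (fun c => Quot.out (FreeM.mul c)) := Trm.bind_bind w _ _
    rw [h1, h2]
    exact Deriv.bind_right w fun c => (FreeM.out_mk _).symm

end Helpers

/-- If `φ, ψ` are the mutually inverse natural transformations induced by
separation, then `(TS, η^Tη^S, φ ∘ μ^U ∘ ψψ)` is a monad: it satisfies both
unit laws and the associativity law. -/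
theorem composite_TS_is_monad (SS TT : Thy) (U : Composite SS TT)
    (φ : ∀ X : Type, FreeM (SS.sig.sum TT.sig) U.eqns X → TSobj SS TT X)
    (ψ : ∀ X : Type, TSobj SS TT X → FreeM (SS.sig.sum TT.sig) U.eqns X)
    (hφ : ∀ (X : Type) (u : Trm (SS.sig.sum TT.sig) X) (t : Trm TT.sig (Trm SS.sig X)),
        Deriv U.eqns u (sepTS t) → φ X (FreeM.mk u) = clTS SS TT t)
    (hψ : ∀ (X : Type) (t : Trm TT.sig (Trm SS.sig X)),
        ψ X (clTS SS TT t) = FreeM.mk (sepTS t))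
    (hφnat : ∀ (X Y : Type) (f : X → Y) (q : FreeM (SS.sig.sum TT.sig) U.eqns X),
        φ Y (FreeM.map f q) = FreeM.map (FreeM.map f) (φ X q))
    (hψnat : ∀ (X Y : Type) (f : X → Y) (q : TSobj SS TT X),
        ψ Y (FreeM.map (FreeM.map f) q) = FreeM.map f (ψ X q))
    (hinv : ∀ X : Type, Function.LeftInverse (ψ X) (φ X) ∧
        Function.RightInverse (ψ X) (φ X)) :
    -- left unit law: μ^{TS} ∘ TSη^{TS} = id
    (∀ (X : Type) (q : TSobj SS TT X),
        muTS SS TT U φ ψ X (FreeM.map (FreeM.map (etaTS SS TT X)) q) = q) ∧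
    -- right unit law: μ^{TS} ∘ η^{TS}TS = id
    (∀ (X : Type) (q : TSobj SS TT X),
        muTS SS TT U φ ψ X (etaTS SS TT (TSobj SS TT X) q) = q) ∧
    -- associativity: μ^{TS} ∘ μ^{TS}TS = μ^{TS} ∘ TSμ^{TS}
    (∀ (X : Type) (q : TSobj SS TT (TSobj SS TT (TSobj SS TT X))),
        muTS SS TT U φ ψ X (muTS SS TT U φ ψ (TSobj SS TT X) q) =
        muTS SS TT U φ ψ X (FreeM.map (FreeM.map (muTS SS TT U φ ψ X)) q)) := by
  have hψη : ∀ (X : Type) (x : X), ψ X (etaTS SS TT X x) = FreeM.unit x := fun X x =>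
    hψ X (.var (.var x))
  refine ⟨?_, ?_, ?_⟩
  · -- left unit
    intro X q
    simp only [muTS]
    have e1 : FreeM.map (FreeM.map (ψ X)) (FreeM.map (FreeM.map (etaTS SS TT X)) q)
        = FreeM.map (FreeM.map (FreeM.unit :
            X → FreeM (SS.sig.sum TT.sig) U.eqns X)) q := by
      rw [FreeM.map_map]
      apply FreeM.map_congr
      intro s
      rw [FreeM.map_map]
      exact FreeM.map_congr (fun x => hψη X x) s
    rw [e1, hψnat, FreeM.mul_map_unit]
    exact (hinv X).2 q
  · -- right unit
    intro X q
    simp only [muTS]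
    have e1 : FreeM.map (FreeM.map (ψ X)) (etaTS SS TT (TSobj SS TT X) q)
        = etaTS SS TT (FreeM (SS.sig.sum TT.sig) U.eqns X) (ψ X q) := by
      show FreeM.map (FreeM.map (ψ X)) (FreeM.unit (FreeM.unit q))
          = FreeM.unit (FreeM.unit (ψ X q))
      rw [FreeM.map_unit, FreeM.map_unit]
    rw [e1, hψη, FreeM.mul_unit]
    exact (hinv X).2 q
  · -- associativity
    intro X q
    have L : muTS SS TT U φ ψ X (muTS SS TT U φ ψ (TSobj SS TT X) q)
        = φ X (FreeM.mul (FreeM.map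
            (fun r => FreeM.mul (FreeM.map (ψ X) (ψ (TSobj SS TT X) r)))
            (ψ (TSobj SS TT (TSobj SS TT X)) q))) := by
      simp only [muTS]
      rw [hψnat, (hinv (TSobj SS TT X)).1, hψnat, FreeM.map_mul, FreeM.mul_mul,
        FreeM.map_map, FreeM.map_map]
    have R : muTS SS TT U φ ψ X (FreeM.map (FreeM.map (muTS SS TT U φ ψ X)) q)
        = φ X (FreeM.mul (FreeM.map
            (fun r => FreeM.mul (FreeM.map (ψ X) (ψ (TSobj SS TT X) r)))
            (ψ (TSobj SS TT (TSobj SS TT X)) q))) := by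
      simp only [muTS]
      have e1 : FreeM.map (FreeM.map (ψ X))
            (FreeM.map (FreeM.map (muTS SS TT U φ ψ X)) q)
          = FreeM.map (FreeM.map (fun r => ψ X (muTS SS TT U φ ψ X r))) q := by
        rw [FreeM.map_map]
        apply FreeM.map_congr
        intro s
        rw [FreeM.map_map]
      rw [e1, hψnat]
      refine congrArg (φ X) (congrArg FreeM.mul (FreeM.map_congr (fun r => ?_) _))
      show ψ X (φ X (FreeM.mul (ψ _ (FreeM.map (FreeM.map (ψ X)) r)))) = _
      rw [(hinv X).1, hψnat]
    exact L.trans R.symm
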